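/- Let Z be a nonnegative random variable with probability density f_Z(z) = (2/(Γ(Q) (Ω₁Ω₂)^((Q+1)/2))) · z^((Q-1)/2) · K_{Q-1}(2√(z/(Ω₁Ω₂))) on (0,∞), where Q is a positive integer and Ω₁, Ω₂ > 0. Then f_Z is a valid probability density (it integrates to 1) and its cumulative distribution function is F_Z(z) = 1 − (2/Γ(Q)) (z/(Ω₁Ω₂))^(Q/2) K_Q(2√(z/(Ω₁Ω₂))). -/

import Mathlib

open MeasureTheory Real Set

/-- The modified Bessel function of the second kind `K_ν(x)`. -/
noncomputable def besselK (ν x : ℝ) : ℝ :=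
  ∫ t in Set.Ioi (0 : ℝ), Real.exp (-x * Real.cosh t) * Real.cosh (ν * t)

lemma aux_meas (ν u : ℝ) : Measurable (fun y : ℝ => y ^ (ν-1) * Real.exp (-y - u/y)) := by
  exact (measurable_id.pow_const _).mul ((measurable_id.neg.sub (measurable_const.div measurable_id)).exp)

lemma aux_int (ν u : ℝ) (hu : 0 < u) :
    IntegrableOn (fun y : ℝ => y ^ (ν-1) * Real.exp (-y - u/y)) (Ioi (0:ℝ)) := by
  obtain ⟨k, hk⟩ := exists_nat_ge (1-ν)
  obtain ⟨m, hm⟩ := exists_nat_ge (ν-1)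
  rw [← Ioc_union_Ioi_eq_Ioi (zero_le_one (α := ℝ)), integrableOn_union]
  constructor
  · refine Integrable.mono' (g := fun _ => (k.factorial : ℝ)/u^k)
      (integrableOn_const measure_Ioc_lt_top.ne)
      (aux_meas ν u).aestronglyMeasurable ?_
    rw [ae_restrict_iff' measurableSet_Ioc]
    filter_upwards with y hy
    obtain ⟨hy0, hy1⟩ := hy
    have hdp : (0:ℝ) < u/y := div_pos hu hy0
    have hfac : (0:ℝ) < k.factorial := by positivity
    have h2 : Real.exp (-(u/y)) ≤ k.factorial * y^k / u^k := by
      have hb := Real.pow_div_factorial_le_exp (x := u/y) hdp.le k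
      have hpowpos : (0:ℝ) < (u/y)^k / k.factorial := by positivity
      have : Real.exp (-(u/y)) ≤ ((u/y)^k / k.factorial)⁻¹ := by
        rw [Real.exp_neg]
        exact inv_anti₀ hpowpos hb
      refine this.trans (le_of_eq ?_)
      rw [div_pow, inv_div]
      field_simp
    have h1 : Real.exp (-y - u/y) ≤ Real.exp (-(u/y)) := by
      apply Real.exp_le_exp.mpr; linarith
    rw [norm_mul, Real.norm_eq_abs, Real.norm_eq_abs, abs_of_pos (Real.rpow_pos_of_pos hy0 _),
      abs_of_pos (Real.exp_pos _)]
    calc y ^ (ν-1) * Real.exp (-y - u/y)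
        ≤ y ^ (ν-1) * (k.factorial * y^k / u^k) :=
          mul_le_mul_of_nonneg_left (h1.trans h2) (Real.rpow_pos_of_pos hy0 _).le
      _ = y ^ (ν-1+k) * (k.factorial / u^k) := by
          rw [Real.rpow_add hy0, Real.rpow_natCast]; ring
      _ ≤ 1 * (k.factorial / u^k) := by
          apply mul_le_mul_of_nonneg_right _ (by positivity)
          exact Real.rpow_le_one hy0.le hy1 (by linarith)
      _ = k.factorial / u^k := one_mul _
  · refine Integrable.mono' ((Real.GammaIntegral_convergent (s := (m:ℝ)+1) (by positivity)).mono_set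
      (Ioi_subset_Ioi zero_le_one)) (aux_meas ν u).aestronglyMeasurable ?_
    rw [ae_restrict_iff' measurableSet_Ioi]
    filter_upwards with y hy
    rw [mem_Ioi] at hy
    have hy0 : (0:ℝ) < y := lt_trans zero_lt_one hy
    rw [norm_mul, Real.norm_eq_abs, Real.norm_eq_abs, abs_of_pos (Real.rpow_pos_of_pos hy0 _),
      abs_of_pos (Real.exp_pos _)]
    have h1 : y ^ (ν-1) ≤ y ^ ((m:ℝ)+1-1) := by
      apply Real.rpow_le_rpow_of_exponent_le hy.le; linarith
    have h2 : Real.exp (-y - u/y) ≤ Real.exp (-y) := by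
      apply Real.exp_le_exp.mpr
      have : 0 < u / y := div_pos hu hy0
      linarith
    calc y ^ (ν-1) * Real.exp (-y - u/y) ≤ y ^ ((m:ℝ)+1-1) * Real.exp (-y) :=
          mul_le_mul h1 h2 (Real.exp_pos _).le (Real.rpow_pos_of_pos hy0 _).le
      _ = Real.exp (-y) * y ^ ((m:ℝ)+1-1) := mul_comm _ _

lemma aux_img (u : ℝ) (hu : 0 < u) :
    (fun s : ℝ => Real.sqrt u * Real.exp s) '' univ = Ioi (0:ℝ) := by
  have hA : 0 < Real.sqrt u := Real.sqrt_pos.mpr hu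
  ext x
  simp only [image_univ, mem_range, mem_Ioi]
  constructor
  · rintro ⟨s, rfl⟩; positivity
  · intro hx
    exact ⟨Real.log (x / Real.sqrt u), by
      rw [Real.exp_log (div_pos hx hA)]; field_simp⟩

lemma aux_deriv (u : ℝ) : ∀ s ∈ (univ : Set ℝ),
    HasDerivWithinAt (fun s : ℝ => Real.sqrt u * Real.exp s) (Real.sqrt u * Real.exp s) univ s :=
  fun s _ => ((Real.hasDerivAt_exp s).const_mul _).hasDerivWithinAt

lemma aux_inj (u : ℝ) (hu : 0 < u) :
    InjOn (fun s : ℝ => Real.sqrt u * Real.exp s) univ := by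
  have hA : Real.sqrt u ≠ 0 := ne_of_gt (Real.sqrt_pos.mpr hu)
  intro a _ b _ h
  simpa [hA] using Real.exp_injective (mul_left_cancel₀ hA h)

-- pointwise identity
lemma aux_point (ν u : ℝ) (hu : 0 < u) (s : ℝ) :
    |Real.sqrt u * Real.exp s| •
      ((Real.sqrt u * Real.exp s) ^ (ν-1) * Real.exp (-(Real.sqrt u * Real.exp s) - u/(Real.sqrt u * Real.exp s)))
    = u ^ (ν/2) * (Real.exp (ν * s) * Real.exp (-(2*Real.sqrt u) * Real.cosh s)) := by
  have hA : 0 < Real.sqrt u := Real.sqrt_pos.mpr hu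
  have hE : 0 < Real.exp s := Real.exp_pos s
  have hAE : 0 < Real.sqrt u * Real.exp s := mul_pos hA hE
  rw [smul_eq_mul, abs_of_pos hAE]
  have e1 : u / (Real.sqrt u * Real.exp s) = Real.sqrt u * Real.exp (-s) := by
    rw [Real.exp_neg]
    field_simp
    linear_combination (-1:ℝ) * (Real.sq_sqrt hu.le)
  have e2 : (Real.sqrt u * Real.exp s) ^ (ν-1) = (Real.sqrt u * Real.exp s) ^ ν / (Real.sqrt u * Real.exp s) :=
    Real.rpow_sub_one (ne_of_gt hAE) ν
  have e3 : (Real.sqrt u * Real.exp s) ^ ν = u ^ (ν/2) * Real.exp (ν * s) := by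
    rw [Real.mul_rpow hA.le hE.le, Real.sqrt_eq_rpow, ← Real.rpow_mul hu.le, ← Real.exp_mul,
      one_div, inv_mul_eq_div, mul_comm s ν]
  have e4 : -(Real.sqrt u * Real.exp s) - u/(Real.sqrt u * Real.exp s) = -(2*Real.sqrt u) * Real.cosh s := by
    rw [e1, Real.cosh_eq]; ring
  rw [e2, e3, e4]
  field_simp

lemma aux_sub1 (ν u : ℝ) (hu : 0 < u) :
    ∫ y in Ioi (0:ℝ), y^(ν-1) * Real.exp (-y - u/y)
      = u^(ν/2) * ∫ s : ℝ, Real.exp (ν * s) * Real.exp (-(2*Real.sqrt u) * Real.cosh s) := by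
  rw [← aux_img u hu,
    integral_image_eq_integral_abs_deriv_smul MeasurableSet.univ (aux_deriv u) (aux_inj u hu),
    Measure.restrict_univ]
  rw [show (fun s : ℝ => |Real.sqrt u * Real.exp s| •
      ((Real.sqrt u * Real.exp s) ^ (ν-1) *
        Real.exp (-(Real.sqrt u * Real.exp s) - u/(Real.sqrt u * Real.exp s))))
      = fun s : ℝ => u ^ (ν/2) * (Real.exp (ν * s) * Real.exp (-(2*Real.sqrt u) * Real.cosh s))
      from funext (aux_point ν u hu), integral_const_mul]

lemma aux_sub1_int (ν u : ℝ) (hu : 0 < u) :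
    Integrable (fun s : ℝ => Real.exp (ν * s) * Real.exp (-(2*Real.sqrt u) * Real.cosh s)) := by
  have h0 : IntegrableOn (fun y : ℝ => y^(ν-1) * Real.exp (-y - u/y))
      ((fun s : ℝ => Real.sqrt u * Real.exp s) '' univ) := by
    rw [aux_img u hu]; exact aux_int ν u hu
  have h1 := (integrableOn_image_iff_integrableOn_abs_deriv_smul MeasurableSet.univ (aux_deriv u)
    (aux_inj u hu) (fun y : ℝ => y^(ν-1) * Real.exp (-y - u/y))).mp h0
  rw [IntegrableOn, Measure.restrict_univ] at h1
  rw [show (fun s : ℝ => |Real.sqrt u * Real.exp s| •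
      ((Real.sqrt u * Real.exp s) ^ (ν-1) *
        Real.exp (-(Real.sqrt u * Real.exp s) - u/(Real.sqrt u * Real.exp s))))
      = fun s : ℝ => u ^ (ν/2) * (Real.exp (ν * s) * Real.exp (-(2*Real.sqrt u) * Real.cosh s))
      from funext (aux_point ν u hu)] at h1
  have h3 := h1.const_mul (u ^ (-(ν/2)))
  have h4 : (fun s : ℝ => u ^ (-(ν/2)) * (u ^ (ν/2) *
      (Real.exp (ν * s) * Real.exp (-(2*Real.sqrt u) * Real.cosh s))))
      = fun s : ℝ => Real.exp (ν * s) * Real.exp (-(2*Real.sqrt u) * Real.cosh s) := by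
    funext s; rw [← mul_assoc, ← Real.rpow_add hu]; norm_num
  rwa [h4] at h3

lemma besselK_eq (ν u : ℝ) (hu : 0 < u) :
    besselK ν (2*Real.sqrt u)
      = (1/2) * u^(-(ν/2)) * ∫ y in Ioi (0:ℝ), y^(ν-1) * Real.exp (-y - u/y) := by
  set C : ℝ → ℝ := fun s => Real.exp (-(2*Real.sqrt u) * Real.cosh s) with hC
  set J : ℝ := ∫ s : ℝ, Real.exp (ν * s) * C s with hJ
  -- step 1 : 2 * besselK = ∫ over ℝ of C s * cosh (ν s)
  have evenG : ∀ s : ℝ, (fun t => Real.exp (-(2*Real.sqrt u) * Real.cosh t) * Real.cosh (ν * t)) |s|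
      = C s * Real.cosh (ν * s) := by
    intro s
    rcases abs_cases s with ⟨h, _⟩ | ⟨h, _⟩
    · rw [h]
    · rw [h]; simp only [mul_neg, Real.cosh_neg, hC]
  have step1 : ∫ s : ℝ, C s * Real.cosh (ν * s) = 2 * besselK ν (2*Real.sqrt u) := by
    rw [besselK, ← integral_comp_abs
      (f := fun t => Real.exp (-(2*Real.sqrt u) * Real.cosh t) * Real.cosh (ν * t))]
    exact (integral_congr_ae (Filter.Eventually.of_forall fun s => (evenG s).symm))
  -- step 2 : split into two exponentials
  have hsplit : (fun s : ℝ => C s * Real.cosh (ν * s))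
      = fun s : ℝ => (1/2) * (Real.exp (ν * s) * C s) + (1/2) * (Real.exp ((-ν) * s) * C s) := by
    funext s
    rw [Real.cosh_eq, show (-ν) * s = -(ν * s) by ring]
    ring
  have hJ' : (∫ s : ℝ, Real.exp ((-ν) * s) * C s) = J := by
    have A : MeasurableEmbedding (fun x : ℝ => -x) :=
      (Homeomorph.neg ℝ).isClosedEmbedding.measurableEmbedding
    have hmap0 : ∫ s : ℝ, (fun x => Real.exp (ν * x) * C x) s
          ∂(Measure.map (fun x : ℝ => -x) (volume : Measure ℝ))
        = ∫ s : ℝ, Real.exp (ν * (-s)) * C (-s) := A.integral_map _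
    rw [show Measure.map (fun x : ℝ => -x) (volume : Measure ℝ) = volume
      from Measure.map_neg_eq_self _] at hmap0
    have hmap : ∫ s : ℝ, Real.exp (ν * s) * C s
        = ∫ s : ℝ, Real.exp (ν * (-s)) * C (-s) := hmap0
    rw [hJ, hmap]
    apply integral_congr_ae
    filter_upwards with s
    rw [hC]
    simp only [Real.cosh_neg]
    ring_nf
  have step2 : ∫ s : ℝ, C s * Real.cosh (ν * s) = J := by
    rw [hsplit, integral_add ((aux_sub1_int ν u hu).const_mul _)
      ((aux_sub1_int (-ν) u hu).const_mul _), integral_const_mul, integral_const_mul, hJ']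
    rw [← hJ]; ring
  -- step 3 : conclude
  have step3 := aux_sub1 ν u hu
  rw [← hJ] at step3
  rw [step3, ← mul_assoc]
  rw [show (1/2 : ℝ) * u^(-(ν/2)) * u^(ν/2) = 1/2 by
    rw [mul_assoc, ← Real.rpow_add hu]; norm_num]
  rw [← step2, step1]; ring

lemma exp_hasDeriv (b : ℝ) (hb : 0 < b) (t : ℝ) :
    HasDerivAt (fun t : ℝ => -b * Real.exp (-(t/b))) (Real.exp (-(t/b))) t := by
  have h : HasDerivAt (fun t : ℝ => -b * Real.exp (-(t/b))) (-b * (Real.exp (-(t/b)) * -(1/b))) t :=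
    ((((hasDerivAt_id' t).div_const b).neg).exp).const_mul (-b)
  convert h using 1
  field_simp

lemma exp_cont (b : ℝ) : Continuous (fun t : ℝ => Real.exp (-(t/b))) := by
  continuity

lemma exp_int_Ioi (b : ℝ) (hb : 0 < b) :
    IntegrableOn (fun z : ℝ => Real.exp (-(z/b))) (Ioi (0:ℝ)) := by
  have : (fun z : ℝ => Real.exp (-(z/b))) = fun z : ℝ => Real.exp (-b⁻¹ * z) := by
    funext z; rw [neg_mul, inv_mul_eq_div]
  rw [this]
  exact exp_neg_integrableOn_Ioi 0 (inv_pos.mpr hb)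

open Filter in
lemma exp_val_Ioi (b : ℝ) (hb : 0 < b) :
    ∫ z in Ioi (0:ℝ), Real.exp (-(z/b)) = b := by
  have htend : Tendsto (fun t : ℝ => -b * Real.exp (-(t/b))) atTop (nhds 0) := by
    have h1 : Tendsto (fun t : ℝ => -(t/b)) atTop atBot := by
      apply Filter.tendsto_neg_atBot_iff.mpr
      exact tendsto_id.atTop_div_const hb
    have h2 := Real.tendsto_exp_atBot.comp h1
    have h3 := h2.const_mul (-b)
    simpa using h3
  have := integral_Ioi_of_hasDerivAt_of_tendsto' (f' := fun t : ℝ => Real.exp (-(t/b)))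
    (fun t _ => exp_hasDeriv b hb t) (exp_int_Ioi b hb) htend
  rw [this]; simp

lemma exp_val_Ioc (b z : ℝ) (hb : 0 < b) (hz : 0 < z) :
    ∫ t in Ioc (0:ℝ) z, Real.exp (-(t/b)) = b * (1 - Real.exp (-(z/b))) := by
  rw [← intervalIntegral.integral_of_le hz.le,
    intervalIntegral.integral_eq_sub_of_hasDerivAt (fun t _ => exp_hasDeriv b hb t)
      ((exp_cont b).intervalIntegrable 0 z)]
  simp only [zero_div, neg_zero, Real.exp_zero]
  ring

/-- The cascaded-Rayleigh density
`f_Z(z) = (2/(Γ(Q)(Ω₁Ω₂)^((Q+1)/2))) z^((Q-1)/2) K_{Q-1}(2√(z/(Ω₁Ω₂)))`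
integrates to 1 on `(0,∞)`, and its CDF is
`F_Z(z) = 1 − (2/Γ(Q)) (z/(Ω₁Ω₂))^(Q/2) K_Q(2√(z/(Ω₁Ω₂)))`. -/
theorem cascaded_rayleigh_density_and_cdf (Q : ℕ) (hQ : 1 ≤ Q) (Ω₁ Ω₂ : ℝ)
    (hΩ₁ : 0 < Ω₁) (hΩ₂ : 0 < Ω₂)
    (f : ℝ → ℝ)
    (hf : ∀ z, 0 < z → f z =
      (2 / (Real.Gamma Q * (Ω₁ * Ω₂) ^ (((Q : ℝ) + 1) / 2))) *
        z ^ (((Q : ℝ) - 1) / 2) * besselK ((Q : ℝ) - 1) (2 * Real.sqrt (z / (Ω₁ * Ω₂)))) :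
    (∫ z in Set.Ioi (0 : ℝ), f z = 1) ∧
    (∀ z, 0 < z → ∫ t in Set.Ioc (0 : ℝ) z, f t =
      1 - (2 / Real.Gamma Q) * (z / (Ω₁ * Ω₂)) ^ ((Q : ℝ) / 2) *
        besselK (Q : ℝ) (2 * Real.sqrt (z / (Ω₁ * Ω₂)))) := by
  set c : ℝ := Ω₁ * Ω₂ with hc_def
  have hc : 0 < c := mul_pos hΩ₁ hΩ₂
  have hQpos : (0:ℝ) < (Q:ℝ) := by exact_mod_cast lt_of_lt_of_le zero_lt_one hQ
  have hG : 0 < Real.Gamma (Q:ℝ) := Real.Gamma_pos_of_pos hQpos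
  set W : ℝ → ℝ → ℝ := fun z y => y ^ ((Q:ℝ)-1-1) * Real.exp (-y - (z/c)/y) with hW_def
  have hWint : ∀ z, 0 < z → IntegrableOn (fun y => W z y) (Ioi (0:ℝ)) := fun z hz =>
    aux_int ((Q:ℝ)-1) (z/c) (div_pos hz hc)
  have hWnn : ∀ z : ℝ, 0 ≤ᵐ[volume.restrict (Ioi (0:ℝ))] fun y => W z y := by
    intro z
    rw [Filter.EventuallyLE, ae_restrict_iff' measurableSet_Ioi]
    filter_upwards with y hy
    rw [mem_Ioi] at hy
    exact mul_nonneg (Real.rpow_nonneg hy.le _) (Real.exp_pos _).le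
  -- density formula in terms of W
  have hfz : ∀ z ∈ Ioi (0:ℝ), f z = (Real.Gamma (Q:ℝ) * c)⁻¹ * ∫ y in Ioi (0:ℝ), W z y := by
    intro z hz
    rw [mem_Ioi] at hz
    have hu : 0 < z / c := div_pos hz hc
    rw [hf z hz, besselK_eq ((Q:ℝ)-1) (z/c) hu]
    have hWI : (∫ y in Ioi (0:ℝ), W z y)
        = ∫ y in Ioi (0:ℝ), y ^ ((Q:ℝ)-1-1) * Real.exp (-y - (z/c)/y) := rfl
    rw [hWI]
    have e1 : (z/c) ^ (-(((Q:ℝ)-1)/2)) = (c ^ (((Q:ℝ)-1)/2)) / (z ^ (((Q:ℝ)-1)/2)) := by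
      rw [Real.rpow_neg hu.le, Real.div_rpow hz.le hc.le, inv_div]
    have e2 : c ^ (((Q:ℝ)+1)/2) = c ^ (((Q:ℝ)-1)/2) * c := by
      rw [show ((Q:ℝ)+1)/2 = ((Q:ℝ)-1)/2 + 1 by ring, Real.rpow_add hc, Real.rpow_one]
    rw [e1, e2]
    have hP1 : 0 < z ^ (((Q:ℝ)-1)/2) := Real.rpow_pos_of_pos hz _
    have hP2 : 0 < c ^ (((Q:ℝ)-1)/2) := Real.rpow_pos_of_pos hc _
    generalize z ^ (((Q:ℝ)-1)/2) = P1 at hP1 ⊢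
    generalize c ^ (((Q:ℝ)-1)/2) = P2 at hP2 ⊢
    generalize (∫ y in Ioi (0:ℝ), y ^ ((Q:ℝ)-1-1) * Real.exp (-y - (z/c)/y)) = I
    field_simp
  -- measurability
  have hWm : Measurable (Function.uncurry W) := by
    have : Function.uncurry W = fun p : ℝ × ℝ =>
        p.2 ^ ((Q:ℝ)-1-1) * Real.exp (-p.2 - (p.1/c)/p.2) := rfl
    rw [this]
    exact (measurable_snd.pow_const _).mul
      ((measurable_snd.neg.sub ((measurable_fst.div_const c).div measurable_snd)).exp)
  set In : ℝ → ℝ := fun z => ∫ y in Ioi (0:ℝ), W z y with hIn_def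
  have hIn_meas : AEStronglyMeasurable In (volume.restrict (Ioi (0:ℝ))) :=
    (hWm.stronglyMeasurable.integral_prod_right').aestronglyMeasurable
  have hIn_nn : ∀ z, 0 ≤ In z := fun z =>
    setIntegral_nonneg measurableSet_Ioi fun y hy =>
      mul_nonneg (Real.rpow_nonneg (le_of_lt hy) _) (Real.exp_pos _).le
  have hprod_meas : AEMeasurable (Function.uncurry fun z y => ENNReal.ofReal (W z y))
      ((volume.restrict (Ioi (0:ℝ))).prod (volume.restrict (Ioi (0:ℝ)))) := by
    exact (ENNReal.measurable_ofReal.comp hWm).aemeasurable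
  -- pointwise splitting of W
  have hWsplit : ∀ y : ℝ, 0 < y → ∀ z : ℝ,
      W z y = (y ^ ((Q:ℝ)-1-1) * Real.exp (-y)) * Real.exp (-(z/(c*y))) := by
    intro y hy z
    rw [hW_def]
    simp only
    rw [show -y - (z/c)/y = -y + -(z/(c*y)) by rw [div_div]; ring, Real.exp_add]
    ring
  have hcy : ∀ y : ℝ, 0 < y → 0 < c * y := fun y hy => mul_pos hc hy
  -- Gamma-type integrand
  have hVint : IntegrableOn (fun y : ℝ => c * (Real.exp (-y) * y ^ ((Q:ℝ)-1))) (Ioi (0:ℝ)) :=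
    (Real.GammaIntegral_convergent hQpos).const_mul c
  have hVval : ∫ y in Ioi (0:ℝ), c * (Real.exp (-y) * y ^ ((Q:ℝ)-1)) = c * Real.Gamma (Q:ℝ) := by
    rw [integral_const_mul, ← Real.Gamma_eq_integral hQpos]
  have hVnn : 0 ≤ᵐ[volume.restrict (Ioi (0:ℝ))]
      fun y : ℝ => c * (Real.exp (-y) * y ^ ((Q:ℝ)-1)) := by
    rw [Filter.EventuallyLE, ae_restrict_iff' measurableSet_Ioi]
    filter_upwards with y hy
    rw [mem_Ioi] at hy
    positivity
  have hcomb : ∀ y : ℝ, 0 < y →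
      (y ^ ((Q:ℝ)-1-1) * Real.exp (-y)) * (c*y) = c * (Real.exp (-y) * y ^ ((Q:ℝ)-1)) := by
    intro y hy
    rw [show (Q:ℝ)-1 = ((Q:ℝ)-1-1) + 1 by ring, Real.rpow_add_one (ne_of_gt hy)]
    ring
  constructor
  · -- PART 1
    have Tval : ∫ z in Ioi (0:ℝ), In z = c * Real.Gamma (Q:ℝ) := by
      rw [integral_eq_lintegral_of_nonneg_ae (Filter.Eventually.of_forall hIn_nn) hIn_meas]
      have h2 : ∫⁻ z in Ioi (0:ℝ), ENNReal.ofReal (In z)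
          = ∫⁻ z in Ioi (0:ℝ), ∫⁻ y in Ioi (0:ℝ), ENNReal.ofReal (W z y) := by
        refine lintegral_congr_ae ((ae_restrict_iff' measurableSet_Ioi).mpr ?_)
        filter_upwards with z hz
        rw [mem_Ioi] at hz
        exact ofReal_integral_eq_lintegral_ofReal (hWint z hz) (hWnn z)
      rw [h2, lintegral_lintegral_swap hprod_meas]
      have h4 : ∫⁻ y in Ioi (0:ℝ), ∫⁻ z in Ioi (0:ℝ), ENNReal.ofReal (W z y)
          = ∫⁻ y in Ioi (0:ℝ), ENNReal.ofReal (c * (Real.exp (-y) * y ^ ((Q:ℝ)-1))) := by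
        refine lintegral_congr_ae ((ae_restrict_iff' measurableSet_Ioi).mpr ?_)
        filter_upwards with y hy
        rw [mem_Ioi] at hy
        have hb := hcy y hy
        calc ∫⁻ z in Ioi (0:ℝ), ENNReal.ofReal (W z y)
            = ∫⁻ z in Ioi (0:ℝ), ENNReal.ofReal
                ((y ^ ((Q:ℝ)-1-1) * Real.exp (-y)) * Real.exp (-(z/(c*y)))) :=
              lintegral_congr fun z => by rw [hWsplit y hy z]
          _ = ENNReal.ofReal (∫ z in Ioi (0:ℝ),
                (y ^ ((Q:ℝ)-1-1) * Real.exp (-y)) * Real.exp (-(z/(c*y)))) := by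
              refine (ofReal_integral_eq_lintegral_ofReal
                ((exp_int_Ioi (c*y) hb).const_mul _) ?_).symm
              filter_upwards with z
              positivity
          _ = ENNReal.ofReal (c * (Real.exp (-y) * y ^ ((Q:ℝ)-1))) := by
              rw [integral_const_mul, exp_val_Ioi (c*y) hb, hcomb y hy]
      rw [h4, ← ofReal_integral_eq_lintegral_ofReal hVint hVnn, hVval,
        ENNReal.toReal_ofReal (by positivity)]
    rw [setIntegral_congr_fun measurableSet_Ioi hfz, integral_const_mul]
    rw [show (fun z => ∫ y in Ioi (0:ℝ), W z y) = In from rfl] at *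
    rw [Tval, mul_comm c]
    exact inv_mul_cancel₀ (ne_of_gt (mul_pos hG hc))
  · -- PART 2
    intro z hz
    have hu : 0 < z / c := div_pos hz hc
    set IQ : ℝ := ∫ y in Ioi (0:ℝ), y ^ ((Q:ℝ)-1) * Real.exp (-y - (z/c)/y) with hIQ_def
    have hIQint : IntegrableOn (fun y : ℝ => y ^ ((Q:ℝ)-1) * Real.exp (-y - (z/c)/y))
        (Ioi (0:ℝ)) := by
      have := aux_int (Q:ℝ) (z/c) hu
      simpa using this
    set U : ℝ → ℝ := fun y => c * (Real.exp (-y) * y ^ ((Q:ℝ)-1))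
      - c * (y ^ ((Q:ℝ)-1) * Real.exp (-y - (z/c)/y)) with hU_def
    have hUint : IntegrableOn U (Ioi (0:ℝ)) := hVint.sub (hIQint.const_mul c)
    have hUnn : ∀ y ∈ Ioi (0:ℝ), 0 ≤ U y := by
      intro y hy
      rw [mem_Ioi] at hy
      have h1 : Real.exp (-y - (z/c)/y) ≤ Real.exp (-y) := by
        apply Real.exp_le_exp.mpr
        have : 0 ≤ (z/c)/y := le_of_lt (div_pos hu hy)
        linarith
      have h2 : 0 ≤ y ^ ((Q:ℝ)-1) := Real.rpow_nonneg hy.le _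
      have h3 := mul_le_mul_of_nonneg_left (mul_le_mul_of_nonneg_left h1 h2) hc.le
      rw [hU_def]
      simp only
      linarith
    have hUval : ∫ y in Ioi (0:ℝ), U y = c * Real.Gamma (Q:ℝ) - c * IQ := by
      rw [hU_def]
      rw [integral_sub hVint (hIQint.const_mul c), hVval, integral_const_mul, hIQ_def]
    have T2 : ∫ t in Ioc (0:ℝ) z, In t = c * Real.Gamma (Q:ℝ) - c * IQ := by
      have hIn_meas2 : AEStronglyMeasurable In (volume.restrict (Ioc (0:ℝ) z)) :=
        (hWm.stronglyMeasurable.integral_prod_right').aestronglyMeasurable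
      rw [integral_eq_lintegral_of_nonneg_ae (Filter.Eventually.of_forall hIn_nn) hIn_meas2]
      have h2 : ∫⁻ t in Ioc (0:ℝ) z, ENNReal.ofReal (In t)
          = ∫⁻ t in Ioc (0:ℝ) z, ∫⁻ y in Ioi (0:ℝ), ENNReal.ofReal (W t y) := by
        refine lintegral_congr_ae ((ae_restrict_iff' measurableSet_Ioc).mpr ?_)
        filter_upwards with t ht
        exact ofReal_integral_eq_lintegral_ofReal (hWint t ht.1) (hWnn t)
      have hprod_meas2 : AEMeasurable (Function.uncurry fun t y => ENNReal.ofReal (W t y))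
          ((volume.restrict (Ioc (0:ℝ) z)).prod (volume.restrict (Ioi (0:ℝ)))) :=
        (ENNReal.measurable_ofReal.comp hWm).aemeasurable
      rw [h2, lintegral_lintegral_swap hprod_meas2]
      have h4 : ∫⁻ y in Ioi (0:ℝ), ∫⁻ t in Ioc (0:ℝ) z, ENNReal.ofReal (W t y)
          = ∫⁻ y in Ioi (0:ℝ), ENNReal.ofReal (U y) := by
        refine lintegral_congr_ae ((ae_restrict_iff' measurableSet_Ioi).mpr ?_)
        filter_upwards with y hy
        rw [mem_Ioi] at hy
        have hb := hcy y hy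
        calc ∫⁻ t in Ioc (0:ℝ) z, ENNReal.ofReal (W t y)
            = ∫⁻ t in Ioc (0:ℝ) z, ENNReal.ofReal
                ((y ^ ((Q:ℝ)-1-1) * Real.exp (-y)) * Real.exp (-(t/(c*y)))) :=
              lintegral_congr fun t => by rw [hWsplit y hy t]
          _ = ENNReal.ofReal (∫ t in Ioc (0:ℝ) z,
                (y ^ ((Q:ℝ)-1-1) * Real.exp (-y)) * Real.exp (-(t/(c*y)))) := by
              refine (ofReal_integral_eq_lintegral_ofReal
                (((exp_cont (c*y)).continuousOn.integrableOn_compact isCompact_Icc).mono_set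
                  Ioc_subset_Icc_self |>.const_mul _) ?_).symm
              filter_upwards with t
              positivity
          _ = ENNReal.ofReal (U y) := by
              rw [integral_const_mul, exp_val_Ioc (c*y) z hb hz]
              congr 1
              rw [hU_def]
              simp only
              have e1 : (y ^ ((Q:ℝ)-1-1) * Real.exp (-y)) * (c*y) = c * (Real.exp (-y) * y ^ ((Q:ℝ)-1)) :=
                hcomb y hy
              have e2 : Real.exp (-y) * Real.exp (-(z/(c*y))) = Real.exp (-y - (z/c)/y) := by
                rw [← Real.exp_add, div_div]
                ring_nf
              linear_combination (1 - Real.exp (-(z/(c*y)))) * e1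
                - c * y ^ ((Q:ℝ)-1) * e2
      have hUnn_ae : 0 ≤ᵐ[volume.restrict (Ioi (0:ℝ))] U := by
        refine (ae_restrict_iff' measurableSet_Ioi).mpr ?_
        filter_upwards with y hy
        exact hUnn y hy
      have hpos : 0 ≤ c * Real.Gamma (Q:ℝ) - c * IQ := by
        have h0 : 0 ≤ ∫ y in Ioi (0:ℝ), U y := setIntegral_nonneg measurableSet_Ioi hUnn
        rw [hUval] at h0
        linarith
      rw [h4, ← ofReal_integral_eq_lintegral_ofReal hUint hUnn_ae, hUval,
        ENNReal.toReal_ofReal hpos]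
    rw [setIntegral_congr_fun measurableSet_Ioc
      (fun t ht => hfz t (mem_Ioi.mpr ht.1)), integral_const_mul]
    rw [show (fun t => ∫ y in Ioi (0:ℝ), W t y) = In from rfl]
    rw [T2, besselK_eq (Q:ℝ) (z/c) hu, ← hIQ_def]
    have hPP : (z/c) ^ ((Q:ℝ)/2) * (z/c) ^ (-((Q:ℝ)/2)) = 1 := by
      rw [← Real.rpow_add hu]; simp
    generalize (z/c) ^ ((Q:ℝ)/2) = A at hPP ⊢
    generalize (z/c) ^ (-((Q:ℝ)/2)) = B at hPP ⊢
    have expand : (Real.Gamma (Q:ℝ) * c)⁻¹ * (c * Real.Gamma (Q:ℝ) - c * IQ)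
        = 1 - IQ / Real.Gamma (Q:ℝ) := by
      field_simp
    have expand2 : 2/Real.Gamma (Q:ℝ) * A * ((1/2) * B * IQ)
        = A * B * IQ / Real.Gamma (Q:ℝ) := by ring
    rw [expand, expand2, hPP, one_mul]
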